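/- Let m > 0 and 0 < α < 1. Then L·log(L)·(1 − Q(mL, αmL)) → 0 as L → ∞, where Q(a,x) = Γ(a,x)/Γ(a). -/

import Mathlib

open Filter MeasureTheory Set

noncomputable def upperIncGamma (a x : ℝ) : ℝ :=
  ∫ t in Set.Ioi x, t ^ (a - 1) * Real.exp (-t)

noncomputable def normUpperIncGamma (a x : ℝ) : ℝ :=
  upperIncGamma a x / Real.Gamma a

private lemma aux_mono {a s t : ℝ} (ht : 0 < t) (hts : t ≤ s) (hs : s ≤ a - 1) :
    t ^ (a - 1) * Real.exp (-t) ≤ s ^ (a - 1) * Real.exp (-s) := by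
  have hs0 : 0 < s := lt_of_lt_of_le ht hts
  rw [Real.rpow_def_of_pos ht, Real.rpow_def_of_pos hs0, ← Real.exp_add, ← Real.exp_add]
  apply Real.exp_le_exp.mpr
  have h1 : Real.log (t / s) ≤ t / s - 1 := Real.log_le_sub_one_of_pos (div_pos ht hs0)
  rw [Real.log_div ht.ne' hs0.ne'] at h1
  have h2 : Real.log t ≤ Real.log s := Real.log_le_log ht hts
  have h3 : s * (t / s - 1) = t - s := by field_simp
  have hA : (a - 1) * (Real.log t - Real.log s) ≤ s * (Real.log t - Real.log s) :=
    mul_le_mul_of_nonpos_right hs (by linarith)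
  have hB : s * (Real.log t - Real.log s) ≤ s * (t / s - 1) :=
    mul_le_mul_of_nonneg_left h1 hs0.le
  nlinarith

private lemma aux_integrable {a : ℝ} (ha : 0 < a) {s : Set ℝ} (hs : s ⊆ Set.Ioi 0) :
    IntegrableOn (fun t => t ^ (a - 1) * Real.exp (-t)) s := by
  have h2 : IntegrableOn (fun t => Real.exp (-t) * t ^ (a - 1)) s :=
    (Real.GammaIntegral_convergent ha).mono_set hs
  simpa [mul_comm] using h2

private lemma gamma_split {a x : ℝ} (ha : 0 < a) (hx : 0 < x) :
    Real.Gamma a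
      = (∫ t in Set.Ioc 0 x, t ^ (a - 1) * Real.exp (-t)) + upperIncGamma a x := by
  rw [Real.Gamma_eq_integral ha]
  have h := setIntegral_union (f := fun t => t ^ (a - 1) * Real.exp (-t))
    (μ := volume) (Set.Ioc_disjoint_Ioi le_rfl) measurableSet_Ioi
    (aux_integrable ha Set.Ioc_subset_Ioi_self)
    (aux_integrable ha (Set.Ioi_subset_Ioi hx.le))
  rw [Set.Ioc_union_Ioi_eq_Ioi hx.le] at h
  rw [show (∫ (t : ℝ) in Set.Ioi 0, Real.exp (-t) * t ^ (a - 1))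
      = ∫ (t : ℝ) in Set.Ioi 0, t ^ (a - 1) * Real.exp (-t) from by
    simp [mul_comm], h, upperIncGamma]

private lemma gamma_low_le {a x : ℝ} (ha : 0 < a) (hx : 0 < x) (hxa : x ≤ a - 1) :
    (∫ t in Set.Ioc 0 x, t ^ (a - 1) * Real.exp (-t))
      ≤ x * (x ^ (a - 1) * Real.exp (-x)) := by
  have h := setIntegral_mono_on (μ := volume)
    (aux_integrable ha Set.Ioc_subset_Ioi_self)
    ((integrableOn_const_iff (by finiteness)).mpr (Or.inr (by rw [Real.volume_Ioc]; exact ENNReal.ofReal_lt_top)))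
    measurableSet_Ioc
    (fun t ht => aux_mono ht.1 ht.2 hxa)
  rw [setIntegral_const] at h
  simpa [Real.volume_Ioc, ENNReal.toReal_ofReal hx.le, mul_comm, max_eq_left hx.le] using h

private lemma gamma_ge {a : ℝ} (ha : 2 ≤ a) :
    (a - 1) ^ (a - 1) * Real.exp (-a) ≤ Real.Gamma a := by
  have ha0 : 0 < a := by linarith
  have hsub : Set.Ioc (a - 1) a ⊆ Set.Ioi 0 :=
    fun t ht => Set.mem_Ioi.mpr (lt_of_le_of_lt (by linarith) ht.1)
  have h1 : (∫ t in Set.Ioc (a - 1) a, t ^ (a - 1) * Real.exp (-t)) ≤ Real.Gamma a := by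
    rw [Real.Gamma_eq_integral ha0,
      show (∫ (t : ℝ) in Set.Ioi 0, Real.exp (-t) * t ^ (a - 1))
        = ∫ (t : ℝ) in Set.Ioi 0, t ^ (a - 1) * Real.exp (-t) from by simp [mul_comm]]
    apply setIntegral_mono_set (aux_integrable ha0 subset_rfl)
    · filter_upwards [ae_restrict_mem measurableSet_Ioi] with t ht
      exact mul_nonneg (Real.rpow_nonneg (le_of_lt ht) _) (Real.exp_nonneg _)
    · exact HasSubset.Subset.eventuallyLE hsub
  have h2 : (a - 1) ^ (a - 1) * Real.exp (-a)
      ≤ ∫ t in Set.Ioc (a - 1) a, t ^ (a - 1) * Real.exp (-t) := by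
    have h := setIntegral_mono_on (μ := volume)
      ((integrableOn_const_iff (C := (a - 1) ^ (a - 1) * Real.exp (-a)) (by finiteness)).mpr (Or.inr (by rw [Real.volume_Ioc]; exact ENNReal.ofReal_lt_top)))
      (aux_integrable ha0 hsub)
      measurableSet_Ioc
      (fun t ht => by
        have hb1 : (a - 1 : ℝ) ^ (a - 1) ≤ t ^ (a - 1) :=
          Real.rpow_le_rpow (by linarith) ht.1.le (by linarith)
        have hb2 : Real.exp (-a) ≤ Real.exp (-t) := Real.exp_le_exp.mpr (by linarith [ht.2])
        exact mul_le_mul hb1 hb2 (Real.exp_nonneg _) (Real.rpow_nonneg (by linarith [ht.1]) _))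
    rw [setIntegral_const] at h
    simpa [Real.volume_Ioc, show a - (a - 1) = (1 : ℝ) from by ring] using h
  linarith

private lemma key_nonneg {α a : ℝ} (hα0 : 0 < α) (ha0 : 0 < a) :
    0 ≤ 1 - normUpperIncGamma a (α * a) := by
  have hx0 : 0 < α * a := mul_pos hα0 ha0
  have hΓpos : 0 < Real.Gamma a := Real.Gamma_pos_of_pos ha0
  have hsplit := gamma_split ha0 hx0
  have hγ0 : 0 ≤ ∫ t in Set.Ioc 0 (α * a), t ^ (a - 1) * Real.exp (-t) :=
    setIntegral_nonneg measurableSet_Ioc fun t ht =>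
      mul_nonneg (Real.rpow_nonneg ht.1.le _) (Real.exp_nonneg _)
  rw [normUpperIncGamma, sub_nonneg, div_le_one hΓpos]
  linarith

private lemma key_bound {α a : ℝ} (hα0 : 0 < α) (hα1 : α < 1) (ha2 : 2 ≤ a)
    (hxa : α * a ≤ a - 1) :
    1 - normUpperIncGamma a (α * a) ≤ Real.exp 1 * a * (α * Real.exp (1 - α)) ^ a := by
  have ha0 : 0 < a := by linarith
  have hx0 : 0 < α * a := mul_pos hα0 ha0
  have hΓpos : 0 < Real.Gamma a := Real.Gamma_pos_of_pos ha0
  set γ := ∫ t in Set.Ioc 0 (α * a), t ^ (a - 1) * Real.exp (-t) with hγ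
  have hsplit := gamma_split ha0 hx0
  have hQ : 1 - normUpperIncGamma a (α * a) = γ / Real.Gamma a := by
    rw [normUpperIncGamma]
    field_simp
    linarith [hsplit]
  rw [hQ]
  have h1 : γ ≤ (α * a) * ((α * a) ^ (a - 1) * Real.exp (-(α * a))) :=
    gamma_low_le ha0 hx0 hxa
  have h2 : (a - 1) ^ (a - 1) * Real.exp (-a) ≤ Real.Gamma a := gamma_ge ha2
  have ha1 : (0:ℝ) < a - 1 := by linarith
  have hden : 0 < (a - 1) ^ (a - 1) * Real.exp (-a) := by positivity
  have hkey : a ^ (a - 1) ≤ Real.exp 1 * (a - 1) ^ (a - 1) := by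
    have he : a ^ (a - 1) = (a - 1) ^ (a - 1) * (1 + 1 / (a - 1)) ^ (a - 1) := by
      rw [← Real.mul_rpow ha1.le (by positivity)]
      congr 1
      field_simp
      ring
    rw [he]
    have h3 : (1 + 1 / (a - 1)) ^ (a - 1) ≤ Real.exp 1 := by
      calc (1 + 1 / (a - 1)) ^ (a - 1)
          ≤ (Real.exp (1 / (a - 1))) ^ (a - 1) :=
            Real.rpow_le_rpow (by positivity)
              (by linarith [Real.add_one_le_exp (1 / (a - 1))]) ha1.le
        _ = Real.exp 1 := by
            rw [Real.rpow_def_of_pos (Real.exp_pos _), Real.log_exp,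
              div_mul_cancel₀ _ ha1.ne']
    calc (a - 1) ^ (a - 1) * (1 + 1 / (a - 1)) ^ (a - 1)
        ≤ (a - 1) ^ (a - 1) * Real.exp 1 :=
          mul_le_mul_of_nonneg_left h3 (by positivity)
      _ = Real.exp 1 * (a - 1) ^ (a - 1) := by ring
  have hβa : (α * Real.exp (1 - α)) ^ a = α ^ a * Real.exp ((1 - α) * a) := by
    rw [Real.mul_rpow hα0.le (Real.exp_nonneg _),
      Real.rpow_def_of_pos (Real.exp_pos _), Real.log_exp]
  have hαa : α ^ a = α ^ (a - 1) * α := by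
    rw [← Real.rpow_add_one hα0.ne' (a - 1), sub_add_cancel]
  have hexp : Real.exp (-(α * a)) = Real.exp ((1 - α) * a) * Real.exp (-a) := by
    rw [← Real.exp_add]; congr 1; ring
  have e1 : (α * a) * ((α * a) ^ (a - 1) * Real.exp (-(α * a)))
      = (α * a * α ^ (a - 1) * Real.exp (-(α * a))) * a ^ (a - 1) := by
    rw [Real.mul_rpow hα0.le ha0.le]; ring
  have e2 : (Real.exp 1 * a * (α * Real.exp (1 - α)) ^ a)
        * ((a - 1) ^ (a - 1) * Real.exp (-a))
      = (α * a * α ^ (a - 1) * Real.exp (-(α * a)))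
        * (Real.exp 1 * (a - 1) ^ (a - 1)) := by
    rw [hβa, hαa, hexp]; ring
  have h4 : (α * a) * ((α * a) ^ (a - 1) * Real.exp (-(α * a)))
      ≤ (Real.exp 1 * a * (α * Real.exp (1 - α)) ^ a)
        * ((a - 1) ^ (a - 1) * Real.exp (-a)) := by
    rw [e1, e2]
    exact mul_le_mul_of_nonneg_left hkey (by positivity)
  calc γ / Real.Gamma a
      ≤ ((α * a) * ((α * a) ^ (a - 1) * Real.exp (-(α * a))))
          / ((a - 1) ^ (a - 1) * Real.exp (-a)) :=
        div_le_div₀ (by positivity) h1 hden h2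
    _ ≤ ((Real.exp 1 * a * (α * Real.exp (1 - α)) ^ a)
          * ((a - 1) ^ (a - 1) * Real.exp (-a)))
          / ((a - 1) ^ (a - 1) * Real.exp (-a)) :=
        div_le_div₀ (by positivity) h4 hden le_rfl
    _ = Real.exp 1 * a * (α * Real.exp (1 - α)) ^ a :=
        mul_div_cancel_right₀ _ hden.ne'

theorem LlogL_gamma_term_tendsto_zero (m α : ℝ) (hm : 0 < m)
    (hα0 : 0 < α) (hα1 : α < 1) :
    Tendsto (fun L : ℝ =>
        L * Real.log L * (1 - normUpperIncGamma (m * L) (α * m * L)))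
      atTop (nhds 0) := by
  set β := α * Real.exp (1 - α) with hβ
  have hβ0 : 0 < β := mul_pos hα0 (Real.exp_pos _)
  have hlogβ : Real.log β < 0 := by
    rw [hβ, Real.log_mul hα0.ne' (Real.exp_pos _).ne', Real.log_exp]
    linarith [Real.log_lt_sub_one_of_pos hα0 (ne_of_lt hα1)]
  set c := -(m * Real.log β) with hc
  have hc0 : 0 < c := by
    have := mul_pos hm (neg_pos.mpr hlogβ)
    rw [hc]; nlinarith
  have hg : Tendsto (fun L : ℝ =>
      (Real.exp 1 * m / c ^ 3) * ((c * L) ^ 3 * Real.exp (-(c * L))))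
      atTop (nhds 0) := by
    have h0 := Real.tendsto_pow_mul_exp_neg_atTop_nhds_zero 3
    have h1 : Tendsto (fun L : ℝ => c * L) atTop atTop :=
      Tendsto.const_mul_atTop hc0 tendsto_id
    have h2 := (h0.comp h1).const_mul (Real.exp 1 * m / c ^ 3)
    simpa [mul_zero, Function.comp] using h2
  refine squeeze_zero' ?_ ?_ hg
  · filter_upwards [eventually_ge_atTop (1 : ℝ)] with L hL1
    have ha0 : 0 < m * L := by nlinarith
    have hxeq : α * m * L = α * (m * L) := by ring
    rw [hxeq]
    have hlogL : 0 ≤ Real.log L := Real.log_nonneg hL1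
    exact mul_nonneg (mul_nonneg (by linarith) hlogL) (key_nonneg hα0 ha0)
  · filter_upwards [eventually_ge_atTop (1 : ℝ), eventually_ge_atTop (2 / m),
      eventually_ge_atTop (1 / ((1 - α) * m))] with L hL1 hL2 hL3
    have hL0 : (0:ℝ) < L := by linarith
    have ha2 : 2 ≤ m * L := by
      rw [div_le_iff₀ hm] at hL2; linarith
    have ha0 : 0 < m * L := by linarith
    have h1α : (0:ℝ) < 1 - α := by linarith
    have hxa : α * (m * L) ≤ m * L - 1 := by
      rw [div_le_iff₀ (mul_pos h1α hm)] at hL3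
      nlinarith
    have hxeq : α * m * L = α * (m * L) := by ring
    rw [hxeq]
    have hkb := key_bound hα0 hα1 ha2 hxa
    have hlogL0 : 0 ≤ Real.log L := Real.log_nonneg hL1
    have hlogL : Real.log L ≤ L := by
      linarith [Real.log_le_sub_one_of_pos hL0]
    have hβL : β ^ (m * L) = Real.exp (-(c * L)) := by
      rw [Real.rpow_def_of_pos hβ0]
      congr 1
      rw [hc]; ring
    calc L * Real.log L * (1 - normUpperIncGamma (m * L) (α * (m * L)))
        ≤ L * Real.log L * (Real.exp 1 * (m * L) * β ^ (m * L)) :=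
          mul_le_mul_of_nonneg_left hkb (mul_nonneg hL0.le hlogL0)
      _ = (Real.exp 1 * m) * (L * L * Real.log L) * Real.exp (-(c * L)) := by
          rw [hβL]; ring
      _ ≤ (Real.exp 1 * m) * (L * L * L) * Real.exp (-(c * L)) := by
          have hs : L * L * Real.log L ≤ L * L * L :=
            mul_le_mul_of_nonneg_left hlogL (by positivity)
          have h := mul_le_mul_of_nonneg_left hs
            (show (0:ℝ) ≤ Real.exp 1 * m by positivity)
          rw [← mul_assoc, ← mul_assoc] at h ⊢
          exact mul_le_mul_of_nonneg_right (by linarith [h]) (Real.exp_nonneg _)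
      _ = (Real.exp 1 * m / c ^ 3) * ((c * L) ^ 3 * Real.exp (-(c * L))) := by
          field_simp
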